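/- Let X be a real Hilbert space and g : X → X be twice continuously Fréchet differentiable with ‖g′(y; u)‖ ≤ κ‖u‖ and ‖g″(y; u, v)‖ ≤ κ̂‖u‖‖v‖ for all y, u, v ∈ X, where κ, κ̂ > 0. Let x_{k−3}, x_{k−2}, x_{k−1} ∈ X with residuals w_{k−2} := g(x_{k−3}) − x_{k−3}, w_{k−1} := g(x_{k−2}) − x_{k−2}, w_k := g(x_{k−1}) − x_{k−1}, w_k ≠ 0. Suppose (α_{k−3}, α_{k−2}, α_{k−1}) minimizes ‖α_{k−3} w_{k−2} + α_{k−2} w_{k−1} + α_{k−1} w_k‖ subject to α_{k−3} + α_{k−2} + α_{k−1} = 1, set γ_{k−2} := α_{k−3}, γ_{k−1} := α_{k−3} + α_{k−2} = 1 − α_{k−1}, w^α_k := α_{k−3} w_{k−2} + α_{k−2} w_{k−1} + α_{k−1} w_k, θ_k := ‖w^α_k‖/‖w_k‖. For 0 < β ≤ 1 set x_k := (1 − β) Σ_{j=k−3}^{k−1} α_j x_j + β Σ_{j=k−3}^{k−1} α_j g(x_j), and define w_{k+1} := g(x_k) − x_k, e_j := x_j − x_{j−1}. Then ‖w_{k+1}‖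 ≤ θ_k ( (1 − β) + κβ ) ‖w_k‖ + κ̂ ( ‖e_k‖ + ‖e_{k−1}‖ ) |γ_{k−1}| ‖e_{k−1}‖ + κ̂ ( ‖e_{k−2}‖ + 2‖e_{k−1}‖ + ‖e_k‖ ) |γ_{k−2}| ‖e_{k−2}‖. -/

import Mathlib

open Set

set_option maxHeartbeats 1000000


/-- one step of depth `m = 2` damped Anderson acceleration satisfies
`‖w_{k+1}‖ ≤ θ_k ((1-β) + κβ) ‖w_k‖ + κ̂ (‖e_k‖ + ‖e_{k-1}‖) |γ_{k-1}| ‖e_{k-1}‖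
  + κ̂ (‖e_{k-2}‖ + 2‖e_{k-1}‖ + ‖e_k‖) |γ_{k-2}| ‖e_{k-2}‖`,
with `γ_{k-2} = α_{k-3}` and `γ_{k-1} = 1 - α_{k-1}`. Here `a3, a2, a1` stand for
`α_{k-3}, α_{k-2}, α_{k-1}` and `xkm3, xkm2, xkm1` for `x_{k-3}, x_{k-2}, x_{k-1}`. -/
theorem stmt_17 {X : Type*} [NormedAddCommGroup X] [InnerProductSpace ℝ X] [CompleteSpace X]
    (g : X → X) (κ κh : ℝ) (hκ : 0 < κ) (hκh : 0 < κh)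
    (hC2 : ContDiff ℝ 2 g)
    (hg1 : ∀ y u : X, ‖fderiv ℝ g y u‖ ≤ κ * ‖u‖)
    (hg2 : ∀ y u v : X, ‖fderiv ℝ (fderiv ℝ g) y u v‖ ≤ κh * ‖u‖ * ‖v‖)
    (xkm3 xkm2 xkm1 : X)
    (wkm2 wkm1 wk : X)
    (hwkm2 : wkm2 = g xkm3 - xkm3)
    (hwkm1 : wkm1 = g xkm2 - xkm2)
    (hwk : wk = g xkm1 - xkm1)
    (hwk0 : wk ≠ 0)
    (a3 a2 a1 : ℝ) (hsum : a3 + a2 + a1 = 1)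
    (hmin : ∀ b3 b2 b1 : ℝ, b3 + b2 + b1 = 1 →
      ‖a3 • wkm2 + a2 • wkm1 + a1 • wk‖ ≤ ‖b3 • wkm2 + b2 • wkm1 + b1 • wk‖)
    (wa : X) (hwa : wa = a3 • wkm2 + a2 • wkm1 + a1 • wk)
    (θ : ℝ) (hθ : θ = ‖wa‖ / ‖wk‖)
    (β : ℝ) (hβ0 : 0 < β) (hβ1 : β ≤ 1)
    (xk : X)
    (hxk : xk = (1 - β) • (a3 • xkm3 + a2 • xkm2 + a1 • xkm1) +
      β • (a3 • g xkm3 + a2 • g xkm2 + a1 • g xkm1))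
    (wk1 : X) (hwk1 : wk1 = g xk - xk) :
    ‖wk1‖ ≤ θ * ((1 - β) + κ * β) * ‖wk‖ +
      κh * (‖xk - xkm1‖ + ‖xkm1 - xkm2‖) * |1 - a1| * ‖xkm1 - xkm2‖ +
      κh * (‖xkm2 - xkm3‖ + 2 * ‖xkm1 - xkm2‖ + ‖xk - xkm1‖) * |a3| * ‖xkm2 - xkm3‖ := by
  have ha2 : a2 = 1 - a3 - a1 := by linarith
  subst ha2
  have hgd : Differentiable ℝ g := hC2.differentiable (by norm_num)
  have hop1 : ∀ y, ‖fderiv ℝ g y‖ ≤ κ := fun y =>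
    ContinuousLinearMap.opNorm_le_bound _ hκ.le (hg1 y)
  have hd1 : ContDiff ℝ 1 (fderiv ℝ g) := hC2.fderiv_right (by norm_num)
  have hop2 : ∀ y, ‖fderiv ℝ (fderiv ℝ g) y‖ ≤ κh := fun y =>
    ContinuousLinearMap.opNorm_le_bound _ hκh.le (fun u =>
      ContinuousLinearMap.opNorm_le_bound _ (by positivity) (fun v => by
        simpa [mul_assoc] using hg2 y u v))
  have hlip : ∀ a b : X, ‖fderiv ℝ g a - fderiv ℝ g b‖ ≤ κh * ‖a - b‖ := fun a b =>
    (convex_univ).norm_image_sub_le_of_norm_fderiv_le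
      (fun x _ => (hd1.differentiable (by norm_num)).differentiableAt)
      (fun x _ => hop2 x) (mem_univ b) (mem_univ a)
  -- abbreviations
  set Ek : X := xk - xkm1 with hEkdef
  set E1 : X := xkm1 - xkm2 with hE1def
  set E2 : X := xkm2 - xkm3 with hE2def
  -- key vector identity
  have hEk : Ek = β • wa - (1 - a1) • E1 - a3 • E2 := by
    rw [hEkdef, hE1def, hE2def, hxk, hwa, hwkm2, hwkm1, hwk]
    module
  -- the comparison curve
  set c : ℝ → X := fun t => g (xkm1 + t • Ek) + (1 - a1) • g (xkm2 + t • E1) +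
    a3 • g (xkm3 + t • E2) with hc
  have hc1 : c 1 = g xk + (1 - a1) • g xkm1 + a3 • g xkm2 := by
    have e1 : xkm1 + (1:ℝ) • Ek = xk := by rw [hEkdef]; module
    have e2 : xkm2 + (1:ℝ) • E1 = xkm1 := by rw [hE1def]; module
    have e3 : xkm3 + (1:ℝ) • E2 = xkm2 := by rw [hE2def]; module
    simp only [hc, e1, e2, e3]
  have hc0 : c 0 = g xkm1 + (1 - a1) • g xkm2 + a3 • g xkm3 := by
    simp [hc]
  -- key algebraic identity
  have hkey : wk1 = (1 - β) • wa + (c 1 - c 0) := by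
    rw [hwk1, hc1, hc0, hwa, hwkm2, hwkm1, hwk, hxk]
    module
  -- derivative of the curve
  set c' : ℝ → X := fun t => fderiv ℝ g (xkm1 + t • Ek) Ek +
    (1 - a1) • fderiv ℝ g (xkm2 + t • E1) E1 + a3 • fderiv ℝ g (xkm3 + t • E2) E2 with hc'
  have hcomp : ∀ (x0 v : X) (t : ℝ),
      HasDerivAt (fun s : ℝ => g (x0 + s • v)) (fderiv ℝ g (x0 + t • v) v) t := by
    intro x0 v t
    have h1 : HasDerivAt (fun s : ℝ => x0 + s • v) v t := by
      simpa using ((hasDerivAt_id t).smul_const v).const_add x0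
    exact (hgd (x0 + t • v)).hasFDerivAt.comp_hasDerivAt t h1
  have hderiv : ∀ t ∈ Icc (0:ℝ) 1, HasDerivWithinAt c (c' t) (Icc (0:ℝ) 1) t := by
    intro t _
    exact (((hcomp xkm1 Ek t).add ((hcomp xkm2 E1 t).const_smul (1 - a1))).add
      ((hcomp xkm3 E2 t).const_smul a3)).hasDerivWithinAt
  -- bound on the derivative
  set M : ℝ := κ * β * ‖wa‖ + κh * (‖E1‖ + ‖Ek‖) * |1 - a1| * ‖E1‖ +
    κh * (‖E1‖ + ‖E2‖ + ‖Ek‖) * |a3| * ‖E2‖ with hM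
  have hbound : ∀ t ∈ Ico (0:ℝ) 1, ‖c' t‖ ≤ M := by
    intro t ht
    obtain ⟨ht0, ht1⟩ := ht
    simp only [hc']
    set A := fderiv ℝ g (xkm1 + t • Ek) with hA
    set B := fderiv ℝ g (xkm2 + t • E1) with hB
    set C := fderiv ℝ g (xkm3 + t • E2) with hC
    have happ : A Ek = β • A wa - (1 - a1) • A E1 - a3 • A E2 := by
      rw [hEk]; simp only [map_sub, map_smul]
    have hsplit : A Ek + (1 - a1) • B E1 + a3 • C E2 =
        β • A wa + (1 - a1) • (B - A) E1 + a3 • (C - A) E2 := by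
      rw [happ]; simp only [ContinuousLinearMap.sub_apply]; module
    have hAB : ‖(xkm2 + t • E1) - (xkm1 + t • Ek)‖ ≤ ‖E1‖ + ‖Ek‖ := by
      have h : (xkm2 + t • E1) - (xkm1 + t • Ek) = (t - 1) • E1 - t • Ek := by
        rw [hE1def]; module
      rw [h]
      refine (norm_sub_le _ _).trans ?_
      rw [norm_smul, norm_smul, Real.norm_eq_abs, Real.norm_eq_abs]
      have h1 : |t - 1| ≤ 1 := by rw [abs_le]; constructor <;> linarith
      have h2 : |t| ≤ 1 := by rw [abs_le]; constructor <;> linarith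
      nlinarith [norm_nonneg E1, norm_nonneg Ek, abs_nonneg (t-1), abs_nonneg t]
    have hAC : ‖(xkm3 + t • E2) - (xkm1 + t • Ek)‖ ≤ ‖E1‖ + ‖E2‖ + ‖Ek‖ := by
      have h : (xkm3 + t • E2) - (xkm1 + t • Ek) = -E1 + (t - 1) • E2 - t • Ek := by
        rw [hE1def, hE2def]; module
      rw [h]
      refine ((norm_sub_le _ _).trans (add_le_add_left (norm_add_le _ _) _)).trans ?_
      rw [norm_neg, norm_smul, norm_smul, Real.norm_eq_abs, Real.norm_eq_abs]
      have h1 : |t - 1| ≤ 1 := by rw [abs_le]; constructor <;> linarith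
      have h2 : |t| ≤ 1 := by rw [abs_le]; constructor <;> linarith
      nlinarith [norm_nonneg E1, norm_nonneg E2, norm_nonneg Ek]
    have hB1 : ‖(B - A) E1‖ ≤ κh * (‖E1‖ + ‖Ek‖) * ‖E1‖ := by
      refine ((B - A).le_opNorm E1).trans ?_
      have := (hlip (xkm2 + t • E1) (xkm1 + t • Ek)).trans
        (by nlinarith [hAB] : κh * ‖(xkm2 + t • E1) - (xkm1 + t • Ek)‖ ≤ κh * (‖E1‖ + ‖Ek‖))
      nlinarith [norm_nonneg E1]
    have hC2' : ‖(C - A) E2‖ ≤ κh * (‖E1‖ + ‖E2‖ + ‖Ek‖) * ‖E2‖ := by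
      refine ((C - A).le_opNorm E2).trans ?_
      have := (hlip (xkm3 + t • E2) (xkm1 + t • Ek)).trans
        (by nlinarith [hAC] : κh * ‖(xkm3 + t • E2) - (xkm1 + t • Ek)‖ ≤
          κh * (‖E1‖ + ‖E2‖ + ‖Ek‖))
      nlinarith [norm_nonneg E2]
    have hAwa : ‖A wa‖ ≤ κ * ‖wa‖ := hg1 _ _
    rw [hsplit]
    refine ((norm_add_le _ _).trans (add_le_add_left (norm_add_le _ _) _)).trans ?_
    rw [norm_smul, norm_smul, norm_smul, Real.norm_eq_abs, Real.norm_eq_abs, Real.norm_eq_abs,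
      abs_of_pos hβ0, hM]
    have g1 : β * ‖A wa‖ ≤ κ * β * ‖wa‖ := by
      have := mul_le_mul_of_nonneg_left hAwa hβ0.le
      linarith [this]
    have g2 : |1 - a1| * ‖(B - A) E1‖ ≤ κh * (‖E1‖ + ‖Ek‖) * |1 - a1| * ‖E1‖ := by
      have := mul_le_mul_of_nonneg_left hB1 (abs_nonneg (1 - a1))
      linarith [this]
    have g3 : |a3| * ‖(C - A) E2‖ ≤ κh * (‖E1‖ + ‖E2‖ + ‖Ek‖) * |a3| * ‖E2‖ := by
      have := mul_le_mul_of_nonneg_left hC2' (abs_nonneg a3)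
      linarith [this]
    linarith [g1, g2, g3]
  have hmv : ‖c 1 - c 0‖ ≤ M := norm_image_sub_le_of_norm_deriv_le_segment_01' hderiv hbound
  have hwk1norm : ‖wk1‖ ≤ (1 - β) * ‖wa‖ + M := by
    rw [hkey]
    refine (norm_add_le _ _).trans ?_
    rw [norm_smul, Real.norm_eq_abs, abs_of_nonneg (by linarith : (0:ℝ) ≤ 1 - β)]
    linarith
  have hwknorm : ‖wk‖ ≠ 0 := norm_ne_zero_iff.mpr hwk0
  have hθeq : θ * ((1 - β) + κ * β) * ‖wk‖ = ((1 - β) + κ * β) * ‖wa‖ := by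
    rw [hθ]; field_simp
  rw [hθeq]
  have hx : 0 ≤ κh * ‖E1‖ * |a3| * ‖E2‖ := by positivity
  rw [hM] at hwk1norm
  linarith [hwk1norm, hx]
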